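/- Let K = conv{M_1,…,M_k} ⊆ ℝ^d with diameter Δ, let u be a unit vector, and suppose u·M_ℓ > u·M_{ℓ'} + cεΔ/(8δ²) for all ℓ' ≠ ℓ. Let x = Σ_{ℓ'} λ_{ℓ'} M_{ℓ'} + z with λ a convex combination, |z| ≤ εΔ, and u·x ≥ u·M_ℓ − εΔ. Then 1 − λ_ℓ ≤ 16δ²/c, and consequently |x − M_ℓ| ≤ (16δ²/c)·Δ + εΔ. -/

import Mathlib

open RealInnerProductSpace

/-- If the direction `u` separates vertex `M_ℓ` from the other vertices with margin
`cεΔ/(8δ²)`, and `x = Σ λ_{ℓ'} M_{ℓ'} + z` is an `ε`-approximate maximizer of `u`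
over `K` with `‖z‖ ≤ εΔ`, then `1 - λ_ℓ ≤ 16δ²/c` and `‖x - M_ℓ‖ ≤ (16δ²/c)Δ + εΔ`. -/
theorem stmt_12 {d k : ℕ} (M : Fin k → EuclideanSpace ℝ (Fin d)) (ε δ c Δ : ℝ)
    (hε : ε ∈ Set.Ioo (0 : ℝ) 1) (hδ : δ ∈ Set.Ioo (0 : ℝ) 1) (hc : 0 < c)
    (hΔ0 : 0 < Δ) (hΔ : Metric.diam (convexHull ℝ (Set.range M)) ≤ Δ)
    (u : EuclideanSpace ℝ (Fin d)) (hu : ‖u‖ = 1) (ℓ : Fin k)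
    (hmargin : ∀ ℓ', ℓ' ≠ ℓ → ⟪u, M ℓ'⟫ + c * ε * Δ / (8 * δ ^ 2) < ⟪u, M ℓ⟫)
    (lam : Fin k → ℝ) (hlam0 : ∀ ℓ', 0 ≤ lam ℓ') (hlam1 : ∑ ℓ', lam ℓ' = 1)
    (z x : EuclideanSpace ℝ (Fin d)) (hz : ‖z‖ ≤ ε * Δ)
    (hx : x = (∑ ℓ', lam ℓ' • M ℓ') + z)
    (hopt : ⟪u, M ℓ⟫ - ε * Δ ≤ ⟪u, x⟫) :
    1 - lam ℓ ≤ 16 * δ ^ 2 / c ∧ ‖x - M ℓ‖ ≤ 16 * δ ^ 2 / c * Δ + ε * Δ := by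
  obtain ⟨hε0, hε1⟩ := hε
  obtain ⟨hδ0, hδ1⟩ := hδ
  set m : ℝ := c * ε * Δ / (8 * δ ^ 2) with hm
  have hδ2 : 0 < (8 : ℝ) * δ ^ 2 := by positivity
  have hm0 : 0 < m := by positivity
  -- 1 - lam ℓ = sum over ℓ' ≠ ℓ
  have hrest : ∑ ℓ' ∈ Finset.univ.erase ℓ, lam ℓ' = 1 - lam ℓ := by
    have := Finset.add_sum_erase Finset.univ lam (Finset.mem_univ ℓ)
    rw [hlam1] at this
    linarith
  -- key inequality on inner products
  have hinner : ⟪u, x⟫ = (∑ ℓ', lam ℓ' * ⟪u, M ℓ'⟫) + ⟪u, z⟫ := by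
    rw [hx, inner_add_right, inner_sum]
    simp_rw [real_inner_smul_right]
  have hsum_le : ∑ ℓ', lam ℓ' * ⟪u, M ℓ'⟫ ≤ ⟪u, M ℓ⟫ - (1 - lam ℓ) * m := by
    have h1 : ∀ ℓ' ∈ Finset.univ.erase ℓ, lam ℓ' * ⟪u, M ℓ'⟫ ≤ lam ℓ' * (⟪u, M ℓ⟫ - m) := by
      intro ℓ' hℓ'
      have hne : ℓ' ≠ ℓ := (Finset.mem_erase.mp hℓ').1
      have := hmargin ℓ' hne
      exact mul_le_mul_of_nonneg_left (by linarith) (hlam0 ℓ')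
    calc ∑ ℓ', lam ℓ' * ⟪u, M ℓ'⟫
        = lam ℓ * ⟪u, M ℓ⟫ + ∑ ℓ' ∈ Finset.univ.erase ℓ, lam ℓ' * ⟪u, M ℓ'⟫ := by
          exact (Finset.add_sum_erase Finset.univ (fun ℓ' => lam ℓ' * ⟪u, M ℓ'⟫)
            (Finset.mem_univ ℓ)).symm
      _ ≤ lam ℓ * ⟪u, M ℓ⟫ + ∑ ℓ' ∈ Finset.univ.erase ℓ, lam ℓ' * (⟪u, M ℓ⟫ - m) := by
          exact add_le_add (le_refl _) (Finset.sum_le_sum h1)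
      _ = lam ℓ * ⟪u, M ℓ⟫ + (1 - lam ℓ) * (⟪u, M ℓ⟫ - m) := by
          rw [← Finset.sum_mul, hrest]
      _ = ⟪u, M ℓ⟫ - (1 - lam ℓ) * m := by ring
  have hzinner : ⟪u, z⟫ ≤ ε * Δ := by
    calc ⟪u, z⟫ ≤ ‖u‖ * ‖z‖ := real_inner_le_norm u z
      _ = ‖z‖ := by rw [hu, one_mul]
      _ ≤ ε * Δ := hz
  have hkey : (1 - lam ℓ) * m ≤ 2 * (ε * Δ) := by
    have := hopt
    rw [hinner] at this
    linarith
  have hfirst : 1 - lam ℓ ≤ 16 * δ ^ 2 / c := by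
    have h2 : 2 * (ε * Δ) = (16 * δ ^ 2 / c) * m := by
      field_simp [hm]
      rw [hm]
      field_simp
      ring
    rw [h2] at hkey
    exact le_of_mul_le_mul_right hkey hm0
  refine ⟨hfirst, ?_⟩
  -- second part
  have hdiam : ∀ ℓ', ‖M ℓ' - M ℓ‖ ≤ Δ := by
    intro ℓ'
    have hcpt : Bornology.IsBounded (convexHull ℝ (Set.range M)) :=
      ((Set.finite_range M).isCompact_convexHull ℝ).isBounded
    have h1 : M ℓ' ∈ convexHull ℝ (Set.range M) :=
      subset_convexHull ℝ _ (Set.mem_range_self ℓ')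
    have h2 : M ℓ ∈ convexHull ℝ (Set.range M) :=
      subset_convexHull ℝ _ (Set.mem_range_self ℓ)
    calc ‖M ℓ' - M ℓ‖ = dist (M ℓ') (M ℓ) := (dist_eq_norm _ _).symm
      _ ≤ Metric.diam (convexHull ℝ (Set.range M)) := Metric.dist_le_diam_of_mem hcpt h1 h2
      _ ≤ Δ := hΔ
  have hxdiff : x - M ℓ = (∑ ℓ', lam ℓ' • (M ℓ' - M ℓ)) + z := by
    rw [hx]
    have : ∑ ℓ', lam ℓ' • (M ℓ' - M ℓ) = (∑ ℓ', lam ℓ' • M ℓ') - (∑ ℓ', lam ℓ') • M ℓ := by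
      rw [Finset.sum_smul]
      rw [← Finset.sum_sub_distrib]
      simp [smul_sub]
    rw [this, hlam1, one_smul]
    abel
  have hnorm : ‖∑ ℓ', lam ℓ' • (M ℓ' - M ℓ)‖ ≤ (1 - lam ℓ) * Δ := by
    calc ‖∑ ℓ', lam ℓ' • (M ℓ' - M ℓ)‖ ≤ ∑ ℓ', ‖lam ℓ' • (M ℓ' - M ℓ)‖ :=
          norm_sum_le _ _
      _ = ∑ ℓ', lam ℓ' * ‖M ℓ' - M ℓ‖ := by
          refine Finset.sum_congr rfl fun ℓ' _ => ?_
          rw [norm_smul, Real.norm_eq_abs, abs_of_nonneg (hlam0 ℓ')]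
      _ = ∑ ℓ' ∈ Finset.univ.erase ℓ, lam ℓ' * ‖M ℓ' - M ℓ‖ := by
          rw [← Finset.add_sum_erase Finset.univ _ (Finset.mem_univ ℓ)]
          simp
      _ ≤ ∑ ℓ' ∈ Finset.univ.erase ℓ, lam ℓ' * Δ := by
          refine Finset.sum_le_sum fun ℓ' _ => ?_
          exact mul_le_mul_of_nonneg_left (hdiam ℓ') (hlam0 ℓ')
      _ = (1 - lam ℓ) * Δ := by rw [← Finset.sum_mul, hrest]
  calc ‖x - M ℓ‖ ≤ ‖∑ ℓ', lam ℓ' • (M ℓ' - M ℓ)‖ + ‖z‖ := by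
        rw [hxdiff]; exact norm_add_le _ _
    _ ≤ (1 - lam ℓ) * Δ + ε * Δ := add_le_add hnorm hz
    _ ≤ 16 * δ ^ 2 / c * Δ + ε * Δ := by
        have := mul_le_mul_of_nonneg_right hfirst hΔ0.le
        linarith
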